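/- If σ > 0, then every local minimum of φ_σ on the box [0,1]ⁿ is a discrete vector (each coordinate is 0 or 1). More precisely, if c ∈ [0,1]ⁿ has some coordinate c_i with 0 < c_i < 1, then c is not a local minimum of φ_σ restricted to [0,1]ⁿ, because φ_σ restricted to varying the single coordinate c_i is a quadratic-over-linear function with strictly negative leading numerator coefficient (coming from −σ c_i² w_i), hence strictly concave wherever stationary. -/
import Mathlib


open Finset

/-- degree / weight of node `i`. -/
noncomputable def w {n : ℕ} (A : Matrix (Fin n) (Fin n) ℝ) (i : Fin n) : ℝ := ∑ j, A i j

/-- σ-conductance as a function of a real membership vector. -/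
noncomputable def phiSigma {n : ℕ} (A : Matrix (Fin n) (Fin n) ℝ) (σ : ℝ) (c : Fin n → ℝ) : ℝ :=
  1 - (∑ i, ∑ j, c i * A i j * c j) / (∑ i, c i * w A i)
    - σ * (∑ i, (c i) ^ 2 * w A i) / (∑ i, c i * w A i)

/-- for σ > 0, a point of the box [0,1]ⁿ having some strictly
fractional coordinate is not a local minimum of σ-conductance on the box. -/
theorem stmt_6 {n : ℕ} (A : Matrix (Fin n) (Fin n) ℝ)
    (hsym : ∀ i j, A i j = A j i) (hnonneg : ∀ i j, 0 ≤ A i j)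
    (hw : ∀ i, 0 < w A i)
    (σ : ℝ) (hσ : 0 < σ) (c : Fin n → ℝ) (hbox : ∀ i, 0 ≤ c i ∧ c i ≤ 1)
    (hvol : 0 < ∑ i, c i * w A i)
    (i : Fin n) (hfrac : 0 < c i ∧ c i < 1) :
    ¬ ∃ ε > 0, ∀ c' : Fin n → ℝ, (∀ j, 0 ≤ c' j ∧ c' j ≤ 1) → ‖c' - c‖ < ε →
        phiSigma A σ c ≤ phiSigma A σ c' := by
  rintro ⟨ε, hε, hmin⟩
  obtain ⟨h0, h1⟩ := hfrac
  set t₀ := c i with ht₀def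
  -- coefficients of the restricted rational function
  set a : ℝ := A i i + σ * w A i with ha
  set b : ℝ := (∑ q ∈ univ.erase i, A i q * c q) + (∑ p ∈ univ.erase i, c p * A p i) with hb
  set n0 : ℝ := (∑ p ∈ univ.erase i, ∑ q ∈ univ.erase i, c p * A p q * c q)
      + σ * ∑ p ∈ univ.erase i, (c p) ^ 2 * w A p with hn0
  set d0 : ℝ := ∑ p ∈ univ.erase i, c p * w A p with hd0
  have ha_pos : 0 < a := by
    have h1 := mul_pos hσ (hw i)
    have h2 := hnonneg i i
    rw [ha]; linarith
  have hd0nn : 0 ≤ d0 := Finset.sum_nonneg fun p _ => mul_nonneg (hbox p).1 (hw p).le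
  -- denominator
  have hD : ∀ t : ℝ, (∑ p, Function.update c i t p * w A p) = w A i * t + d0 := by
    intro t
    rw [← Finset.add_sum_erase univ _ (mem_univ i), Function.update_self, hd0, mul_comm]
    congr 1
    exact Finset.sum_congr rfl fun p hp => by
      rw [Function.update_of_ne (Finset.ne_of_mem_erase hp)]
  -- the restricted function
  have hphi : ∀ t : ℝ, phiSigma A σ (Function.update c i t)
      = 1 - (a * t ^ 2 + b * t + n0) / (w A i * t + d0) := by
    intro t
    have hS2 : (∑ p, (Function.update c i t p) ^ 2 * w A p)
        = t ^ 2 * w A i + ∑ p ∈ univ.erase i, (c p) ^ 2 * w A p := by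
      rw [← Finset.add_sum_erase univ _ (mem_univ i), Function.update_self]
      congr 1
      exact Finset.sum_congr rfl fun p hp => by
        rw [Function.update_of_ne (Finset.ne_of_mem_erase hp)]
    have hS1 : (∑ p, ∑ q, Function.update c i t p * A p q * Function.update c i t q)
        = t * A i i * t + t * (∑ q ∈ univ.erase i, A i q * c q)
          + ((∑ p ∈ univ.erase i, c p * A p i) * t
            + ∑ p ∈ univ.erase i, ∑ q ∈ univ.erase i, c p * A p q * c q) := by
      rw [← Finset.add_sum_erase univ _ (mem_univ i)]
      congr 1
      · rw [← Finset.add_sum_erase univ _ (mem_univ i), Function.update_self, Finset.mul_sum]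
        congr 1
        exact Finset.sum_congr rfl fun q hq => by
          rw [Function.update_of_ne (Finset.ne_of_mem_erase hq)]; ring
      · rw [Finset.sum_mul, ← Finset.sum_add_distrib]
        refine Finset.sum_congr rfl fun p hp => ?_
        rw [← Finset.add_sum_erase univ _ (mem_univ i), Function.update_self,
          Function.update_of_ne (Finset.ne_of_mem_erase hp)]
        congr 1
        exact Finset.sum_congr rfl fun q hq => by
          rw [Function.update_of_ne (Finset.ne_of_mem_erase hq)]
    unfold phiSigma
    rw [hD, hS1, hS2, ha, hb, hn0]
    rw [sub_sub, ← add_div]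
    congr 1
    ring
  have hphic : phiSigma A σ c = 1 - (a * t₀ ^ 2 + b * t₀ + n0) / (w A i * t₀ + d0) := by
    have h := hphi t₀
    rwa [ht₀def, Function.update_eq_self] at h
  have hD0 : 0 < w A i * t₀ + d0 := by
    have h := hD t₀
    rw [ht₀def, Function.update_eq_self] at h
    rw [← h]; exact hvol
  set N₀ : ℝ := a * t₀ ^ 2 + b * t₀ + n0 with hN₀
  set D₀ : ℝ := w A i * t₀ + d0 with hD₀
  -- key comparison lemma
  have key : ∀ t : ℝ, 0 < w A i * t + d0 →
      0 < (t - t₀) * (a * D₀ * (t + t₀) + b * D₀ - N₀ * w A i) →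
      phiSigma A σ (Function.update c i t) < phiSigma A σ c := by
    intro t hDt hpos
    rw [hphi t, hphic]
    have hid : (a * t ^ 2 + b * t + n0) * D₀ - N₀ * (w A i * t + d0)
        = (t - t₀) * (a * D₀ * (t + t₀) + b * D₀ - N₀ * w A i) := by
      rw [hN₀, hD₀]; ring
    have hlt : N₀ / D₀ < (a * t ^ 2 + b * t + n0) / (w A i * t + d0) := by
      rw [div_lt_div_iff₀ hD0 hDt]
      linarith [hid, hpos]
    linarith
  -- the perturbation size
  set δ : ℝ := min (ε / 2) (min (t₀ / 2) ((1 - t₀) / 2)) with hδ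
  have hδε : δ ≤ ε / 2 := min_le_left _ _
  have hδt₀ : δ ≤ t₀ / 2 := le_trans (min_le_right _ _) (min_le_left _ _)
  have hδ1 : δ ≤ (1 - t₀) / 2 := le_trans (min_le_right _ _) (min_le_right _ _)
  have hδpos : 0 < δ := lt_min (by linarith) (lt_min (by linarith) (by linarith))
  -- norm and box conditions for a single-coordinate perturbation
  have hnorm : ∀ t : ℝ, |t - t₀| < ε → ‖Function.update c i t - c‖ < ε := by
    intro t ht
    rw [pi_norm_lt_iff hε]
    intro j
    rw [Pi.sub_apply, Real.norm_eq_abs]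
    rcases eq_or_ne j i with rfl | hj
    · rw [Function.update_self]; exact ht
    · rw [Function.update_of_ne hj]; simpa using hε
  have hboxup : ∀ t : ℝ, 0 ≤ t → t ≤ 1 → ∀ j, 0 ≤ Function.update c i t j ∧ Function.update c i t j ≤ 1 := by
    intro t ht0 ht1 j
    rcases eq_or_ne j i with rfl | hj
    · rw [Function.update_self]; exact ⟨ht0, ht1⟩
    · rw [Function.update_of_ne hj]; exact hbox j
  -- the contradiction: pick t = t₀ ± δ depending on the sign of the affine factor at t₀
  have main : ∃ t : ℝ, 0 ≤ t ∧ t ≤ 1 ∧ |t - t₀| < ε ∧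
      phiSigma A σ (Function.update c i t) < phiSigma A σ c := by
    by_cases hK : 0 ≤ a * D₀ * (2 * t₀) + b * D₀ - N₀ * w A i
    · refine ⟨t₀ + δ, by linarith, by linarith, by rw [abs_of_pos (by linarith : (0:ℝ) < t₀ + δ - t₀)]; linarith, ?_⟩
      apply key
      · have := mul_pos (hw i) (show (0:ℝ) < t₀ + δ by linarith)
        linarith
      · have h1 : 0 < a * D₀ := mul_pos ha_pos hD0
        have h2 : 0 < a * D₀ * δ := mul_pos h1 hδpos
        have h3 : a * D₀ * (t₀ + δ + t₀) + b * D₀ - N₀ * w A i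
            = (a * D₀ * (2 * t₀) + b * D₀ - N₀ * w A i) + a * D₀ * δ := by ring
        have h4 : 0 < a * D₀ * (t₀ + δ + t₀) + b * D₀ - N₀ * w A i := by linarith
        have h5 : 0 < t₀ + δ - t₀ := by linarith
        exact mul_pos h5 h4
    · push_neg at hK
      refine ⟨t₀ - δ, by linarith, by linarith, by rw [abs_of_neg (by linarith : t₀ - δ - t₀ < 0)]; linarith, ?_⟩
      apply key
      · have := mul_pos (hw i) (show (0:ℝ) < t₀ - δ by linarith)
        linarith
      · have h1 : 0 < a * D₀ := mul_pos ha_pos hD0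
        have h2 : 0 < a * D₀ * δ := mul_pos h1 hδpos
        have h3 : a * D₀ * (t₀ - δ + t₀) + b * D₀ - N₀ * w A i
            = (a * D₀ * (2 * t₀) + b * D₀ - N₀ * w A i) - a * D₀ * δ := by ring
        have h4 : a * D₀ * (t₀ - δ + t₀) + b * D₀ - N₀ * w A i < 0 := by linarith
        have h5 : t₀ - δ - t₀ < 0 := by linarith
        exact mul_pos_of_neg_of_neg h5 h4
  obtain ⟨t, ht0, ht1, htε, hlt⟩ := main
  have := hmin (Function.update c i t) (hboxup t ht0 ht1) (hnorm t htε)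
  linarith
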